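/- Let C and C' be Ptolemy circles and let x₁,x₂,x₃ ∈ C and x₁',x₂',x₃' ∈ C' be triples of distinct points. Then there exists a unique Möbius homeomorphism φ: C → C' with φ(xᵢ) = xᵢ' for i = 1,2,3. -/

import Mathlib

/-- A map between metric spaces is Möbius if it is injective and preserves the
cross-ratio triple of every quadruple (stated via cross-multiplication of the
projective coordinates). -/
def IsMoebiusMap {C C' : Type*} [MetricSpace C] [MetricSpace C'] (φ : C → C') : Prop :=
  Function.Injective φ ∧
  ∀ a b c e : C,
    (dist a b * dist c e) * (dist (φ a) (φ c) * dist (φ b) (φ e)) =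
      (dist (φ a) (φ b) * dist (φ c) (φ e)) * (dist a c * dist b e) ∧
    (dist a c * dist b e) * (dist (φ a) (φ e) * dist (φ b) (φ c)) =
      (dist (φ a) (φ c) * dist (φ b) (φ e)) * (dist a e * dist b c) ∧
    (dist a b * dist c e) * (dist (φ a) (φ e) * dist (φ b) (φ c)) =
      (dist (φ a) (φ b) * dist (φ c) (φ e)) * (dist a e * dist b c)

open Set Filter Topology

structure PtCircle (X : Type*) [MetricSpace X] where
  γ : ℝ → X
  cont : Continuous γ
  per : ∀ t, γ (t + 1) = γ t
  inj : ∀ s t : ℝ, s ∈ Set.Ico (0:ℝ) 1 → t ∈ Set.Ico (0:ℝ) 1 → γ s = γ t → s = t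
  surj : Function.Surjective γ
  circ : ∀ t₁ t₂ t₃ t₄ : ℝ, t₁ ≤ t₂ → t₂ ≤ t₃ → t₃ ≤ t₄ → t₄ ≤ t₁ + 1 →
      dist (γ t₁) (γ t₃) * dist (γ t₂) (γ t₄) =
        dist (γ t₁) (γ t₂) * dist (γ t₃) (γ t₄) + dist (γ t₁) (γ t₄) * dist (γ t₂) (γ t₃)

namespace PtCircle

variable {X : Type*} [MetricSpace X] (P : PtCircle X)

theorem per_nat (n : ℕ) (t : ℝ) : P.γ (t + n) = P.γ t := by
  induction n with
  | zero => simp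
  | succ n ih => rw [← ih]; rw [show t + (n+1:ℕ) = (t + n) + 1 by push_cast; ring, P.per]

theorem per_int (n : ℤ) (t : ℝ) : P.γ (t + n) = P.γ t := by
  rcases n with n | n
  · exact_mod_cast P.per_nat n t
  · have := P.per_nat (n+1) (t + Int.negSucc n)
    rw [show t + Int.negSucc n + (n+1:ℕ) = t by push_cast [Int.negSucc_eq]; ring] at this
    exact this.symm

theorem gamma_fract (t : ℝ) : P.γ (Int.fract t) = P.γ t := by
  have h : t = Int.fract t + (⌊t⌋ : ℤ) := by rw [Int.fract]; ring
  conv_rhs => rw [h]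
  exact (P.per_int ⌊t⌋ (Int.fract t)).symm

theorem eq_iff {s t : ℝ} : P.γ s = P.γ t ↔ Int.fract s = Int.fract t := by
  constructor
  · intro h
    refine P.inj _ _ ⟨Int.fract_nonneg s, Int.fract_lt_one s⟩ ⟨Int.fract_nonneg t, Int.fract_lt_one t⟩ ?_
    rw [P.gamma_fract, P.gamma_fract, h]
  · intro h
    rw [← P.gamma_fract s, ← P.gamma_fract t, h]

/-- Shift the parametrization. -/
def shift (c : ℝ) : PtCircle X where
  γ := fun t => P.γ (t + c)
  cont := P.cont.comp (by continuity)
  per := fun t => by show P.γ (t + 1 + c) = P.γ (t + c)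
                     rw [show t + 1 + c = (t + c) + 1 by ring, P.per]
  inj := fun s t hs ht h => by
    have h2 : Int.fract (s + c) = Int.fract (t + c) := (P.eq_iff).1 h
    have h3 : Int.fract s = Int.fract t := by
      rw [Int.fract_eq_fract] at h2 ⊢
      obtain ⟨z, hz⟩ := h2
      exact ⟨z, by linarith⟩
    rw [Int.fract_eq_self.2 hs] at h3
    rw [Int.fract_eq_self.2 ht] at h3
    exact h3
  surj := fun y => by
    obtain ⟨u, hu⟩ := P.surj y
    exact ⟨u - c, by simpa using hu⟩
  circ := fun t₁ t₂ t₃ t₄ h1 h2 h3 h4 =>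
    P.circ (t₁ + c) (t₂ + c) (t₃ + c) (t₄ + c) (by linarith) (by linarith) (by linarith)
      (by linarith)

/-- The base point. -/
def ω : X := P.γ 0

theorem ne_omega {t : ℝ} (ht : t ∈ Ioo (0:ℝ) 1) : P.γ t ≠ P.ω := fun h => by
  have := P.inj t 0 ⟨ht.1.le, ht.2⟩ (by constructor <;> norm_num) h
  exact ht.1.ne' this

theorem dist_omega_pos {t : ℝ} (ht : t ∈ Ioo (0:ℝ) 1) : 0 < dist (P.γ t) P.ω :=
  dist_pos.2 (P.ne_omega ht)

theorem gamma_ne {s t : ℝ} (hs : s ∈ Ico (0:ℝ) 1) (ht : t ∈ Ico (0:ℝ) 1) (h : s ≠ t) :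
    P.γ s ≠ P.γ t := fun he => h (P.inj s t hs ht he)

/-- Inverted distance coordinate. -/
noncomputable def D (s t : ℝ) : ℝ :=
  dist (P.γ s) (P.γ t) / (dist (P.γ s) P.ω * dist (P.γ t) P.ω)

theorem D_symm (s t : ℝ) : P.D s t = P.D t s := by
  unfold D; rw [dist_comm (P.γ s) (P.γ t), mul_comm]

theorem D_self (t : ℝ) : P.D t t = 0 := by unfold D; simp

theorem D_nonneg (s t : ℝ) : 0 ≤ P.D s t :=
  div_nonneg dist_nonneg (mul_nonneg dist_nonneg dist_nonneg)

theorem D_pos {s t : ℝ} (hs : s ∈ Ioo (0:ℝ) 1) (ht : t ∈ Ioo (0:ℝ) 1) (h : s ≠ t) :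
    0 < P.D s t :=
  div_pos (dist_pos.2 (P.gamma_ne ⟨hs.1.le, hs.2⟩ ⟨ht.1.le, ht.2⟩ h))
    (mul_pos (P.dist_omega_pos hs) (P.dist_omega_pos ht))

theorem D_add {s t u : ℝ} (hs : s ∈ Ioo (0:ℝ) 1) (hu : u ∈ Ioo (0:ℝ) 1)
    (h1 : s ≤ t) (h2 : t ≤ u) : P.D s u = P.D s t + P.D t u := by
  have ht : t ∈ Ioo (0:ℝ) 1 := ⟨lt_of_lt_of_le hs.1 h1, lt_of_le_of_lt h2 hu.2⟩
  have key := P.circ 0 s t u hs.1.le h1 h2 (by linarith [hu.2])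
  have hds : dist (P.γ s) P.ω ≠ 0 := (P.dist_omega_pos hs).ne'
  have hdt : dist (P.γ t) P.ω ≠ 0 := (P.dist_omega_pos ht).ne'
  have hdu : dist (P.γ u) P.ω ≠ 0 := (P.dist_omega_pos hu).ne'
  unfold D
  rw [div_add_div _ _ (by positivity) (by positivity), div_eq_div_iff (by positivity) (by positivity)]
  rw [show P.ω = P.γ 0 from rfl]
  rw [dist_comm (P.γ s) (P.γ 0), dist_comm (P.γ t) (P.γ 0), dist_comm (P.γ u) (P.γ 0)]
  rw [show P.ω = P.γ 0 from rfl] at hds hdt hdu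
  rw [dist_comm (P.γ s) (P.γ 0)] at hds
  rw [dist_comm (P.γ t) (P.γ 0)] at hdt
  rw [dist_comm (P.γ u) (P.γ 0)] at hdu
  linear_combination (dist (P.γ 0) (P.γ s) * dist (P.γ 0) (P.γ t) * dist (P.γ 0) (P.γ u)) * key

/-- Signed coordinate on the cut circle `(0,1)`. -/
noncomputable def F (t : ℝ) : ℝ := if 2⁻¹ ≤ t then P.D 2⁻¹ t else -P.D 2⁻¹ t

theorem half_mem : (2⁻¹ : ℝ) ∈ Ioo (0:ℝ) 1 := by norm_num

theorem F_sub {s t : ℝ} (hs : s ∈ Ioo (0:ℝ) 1) (ht : t ∈ Ioo (0:ℝ) 1) (h : s ≤ t) :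
    P.F t - P.F s = P.D s t := by
  unfold F
  rcases le_or_gt 2⁻¹ s with h1 | h1
  · rw [if_pos (h1.trans h), if_pos h1]
    have := P.D_add half_mem ht h1 h
    linarith
  · rcases le_or_gt 2⁻¹ t with h2 | h2
    · rw [if_pos h2, if_neg h1.not_ge]
      have h3 := P.D_add hs ht h1.le h2
      rw [P.D_symm 2⁻¹ s]
      linarith
    · rw [if_neg h2.not_ge, if_neg h1.not_ge]
      have h3 := P.D_add hs half_mem h h2.le
      rw [P.D_symm 2⁻¹ s, P.D_symm 2⁻¹ t]
      linarith

theorem strictMonoOn_F : StrictMonoOn P.F (Ioo (0:ℝ) 1) := by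
  intro s hs t ht h
  have h1 := P.F_sub hs ht h.le
  have h2 := P.D_pos hs ht h.ne
  linarith

theorem dist_eq_F {s t : ℝ} (hs : s ∈ Ioo (0:ℝ) 1) (ht : t ∈ Ioo (0:ℝ) 1) :
    dist (P.γ s) (P.γ t) = |P.F t - P.F s| * (dist (P.γ s) P.ω * dist (P.γ t) P.ω) := by
  have key : ∀ s t : ℝ, s ∈ Ioo (0:ℝ) 1 → t ∈ Ioo (0:ℝ) 1 → s ≤ t →
      dist (P.γ s) (P.γ t) = |P.F t - P.F s| * (dist (P.γ s) P.ω * dist (P.γ t) P.ω) := by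
    intro s t hs ht h
    rw [P.F_sub hs ht h, abs_of_nonneg (P.D_nonneg s t)]
    rw [D, div_mul_cancel₀ _ (mul_pos (P.dist_omega_pos hs) (P.dist_omega_pos ht)).ne']
  rcases le_total s t with h | h
  · exact key s t hs ht h
  · rw [dist_comm, key t s ht hs h, abs_sub_comm, mul_comm (dist (P.γ t) P.ω)]

theorem continuousOn_D_half : ContinuousOn (fun t => P.D 2⁻¹ t) (Ioo (0:ℝ) 1) := by
  apply ContinuousOn.div
  · exact (continuous_const.dist P.cont).continuousOn
  · exact (continuous_const.mul (P.cont.dist continuous_const)).continuousOn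
  · intro t ht
    exact (mul_pos (P.dist_omega_pos half_mem) (P.dist_omega_pos ht)).ne'

theorem continuousOn_F : ContinuousOn P.F (Ioo (0:ℝ) 1) := by
  intro t ht
  rcases lt_trichotomy t 2⁻¹ with h | h | h
  · have hev : ∀ᶠ u in 𝓝[Ioo (0:ℝ) 1] t, P.F u = -P.D 2⁻¹ u := by
      filter_upwards [eventually_nhdsWithin_of_eventually_nhds
        (Filter.Tendsto.eventually_lt_const h tendsto_id)] with u hu
      exact if_neg (not_le.2 hu)
    exact ((P.continuousOn_D_half t ht).neg).congr_of_eventuallyEq hev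
      (by simp [F, if_neg (not_le.2 h)])
  · subst h
    have h0 : P.F 2⁻¹ = 0 := by simp [F, D_self]
    rw [ContinuousWithinAt, h0]
    have habs : ∀ u, |P.F u| = P.D 2⁻¹ u := by
      intro u
      unfold F
      rcases le_or_gt 2⁻¹ u with h | h
      · rw [if_pos h, abs_of_nonneg (P.D_nonneg _ _)]
      · rw [if_neg h.not_ge, abs_neg, abs_of_nonneg (P.D_nonneg _ _)]
    have hD : Tendsto (fun u => P.D 2⁻¹ u) (𝓝[Ioo (0:ℝ) 1] 2⁻¹) (𝓝 0) := by
      have h2 := P.continuousOn_D_half 2⁻¹ half_mem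
      rw [ContinuousWithinAt] at h2
      simpa [D_self] using h2
    exact squeeze_zero_norm' (by filter_upwards with u using le_of_eq (by rw [Real.norm_eq_abs, habs])) hD
  · have hev : ∀ᶠ u in 𝓝[Ioo (0:ℝ) 1] t, P.F u = P.D 2⁻¹ u := by
      filter_upwards [eventually_nhdsWithin_of_eventually_nhds
        (Filter.Tendsto.eventually_const_lt h tendsto_id)] with u hu
      exact if_pos hu.le
    exact (P.continuousOn_D_half t ht).congr_of_eventuallyEq hev (by simp [F, if_pos h.le])

theorem gamma_one : P.γ 1 = P.ω := by
  have := P.per 0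
  simpa [ω] using this

theorem tendsto_dist_omega_one :
    Tendsto (fun t => dist (P.γ t) P.ω) (𝓝[Ioo (0:ℝ) 1] 1) (𝓝[>] 0) := by
  rw [tendsto_nhdsWithin_iff]
  constructor
  · have hc : Continuous (fun t => dist (P.γ t) P.ω) := P.cont.dist continuous_const
    have h2 := (hc.tendsto 1).mono_left (nhdsWithin_le_nhds (s := Ioo (0:ℝ) 1))
    simpa [P.gamma_one] using h2
  · filter_upwards [self_mem_nhdsWithin] with t ht
    exact P.dist_omega_pos ht

theorem tendsto_dist_omega_zero :
    Tendsto (fun t => dist (P.γ t) P.ω) (𝓝[Ioo (0:ℝ) 1] 0) (𝓝[>] 0) := by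
  rw [tendsto_nhdsWithin_iff]
  constructor
  · have hc : Continuous (fun t => dist (P.γ t) P.ω) := P.cont.dist continuous_const
    have h2 := (hc.tendsto 0).mono_left (nhdsWithin_le_nhds (s := Ioo (0:ℝ) 1))
    simpa [ω] using h2
  · filter_upwards [self_mem_nhdsWithin] with t ht
    exact P.dist_omega_pos ht

theorem tendsto_D_half_one :
    Tendsto (fun t => P.D 2⁻¹ t) (𝓝[Ioo (0:ℝ) 1] 1) atTop := by
  have h1 : Tendsto (fun t => dist (P.γ 2⁻¹) (P.γ t) / (dist (P.γ 2⁻¹) P.ω))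
      (𝓝[Ioo (0:ℝ) 1] 1) (𝓝 1) := by
    have hc : Continuous (fun t => dist (P.γ 2⁻¹) (P.γ t) / (dist (P.γ 2⁻¹) P.ω)) :=
      (continuous_const.dist P.cont).div_const _
    have h2 := (hc.tendsto 1).mono_left (nhdsWithin_le_nhds (s := Ioo (0:ℝ) 1))
    have h3 : dist (P.γ 2⁻¹) (P.γ 1) / dist (P.γ 2⁻¹) P.ω = 1 := by
      rw [P.gamma_one, div_self (P.dist_omega_pos half_mem).ne']
    rwa [h3] at h2
  have h2 : Tendsto (fun t => (dist (P.γ t) P.ω)⁻¹) (𝓝[Ioo (0:ℝ) 1] 1) atTop :=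
    tendsto_inv_nhdsGT_zero.comp P.tendsto_dist_omega_one
  have := h1.pos_mul_atTop one_pos h2
  apply this.congr
  intro t
  rw [D]
  ring

theorem tendsto_D_half_zero :
    Tendsto (fun t => P.D 2⁻¹ t) (𝓝[Ioo (0:ℝ) 1] 0) atTop := by
  have h1 : Tendsto (fun t => dist (P.γ 2⁻¹) (P.γ t) / (dist (P.γ 2⁻¹) P.ω))
      (𝓝[Ioo (0:ℝ) 1] 0) (𝓝 1) := by
    have hc : Continuous (fun t => dist (P.γ 2⁻¹) (P.γ t) / (dist (P.γ 2⁻¹) P.ω)) :=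
      (continuous_const.dist P.cont).div_const _
    have h2 := (hc.tendsto 0).mono_left (nhdsWithin_le_nhds (s := Ioo (0:ℝ) 1))
    have h3 : dist (P.γ 2⁻¹) (P.γ 0) / dist (P.γ 2⁻¹) P.ω = 1 := by
      rw [show P.γ 0 = P.ω from rfl, div_self (P.dist_omega_pos half_mem).ne']
    rwa [h3] at h2
  have h2 : Tendsto (fun t => (dist (P.γ t) P.ω)⁻¹) (𝓝[Ioo (0:ℝ) 1] 0) atTop :=
    tendsto_inv_nhdsGT_zero.comp P.tendsto_dist_omega_zero
  have := h1.pos_mul_atTop one_pos h2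
  apply this.congr
  intro t
  rw [D]
  ring

theorem tendsto_F_one : Tendsto P.F (𝓝[Ioo (0:ℝ) 1] 1) atTop := by
  apply P.tendsto_D_half_one.congr'
  filter_upwards [eventually_nhdsWithin_of_eventually_nhds
    (Filter.Tendsto.eventually_const_lt (by norm_num : (2⁻¹:ℝ) < 1) tendsto_id)] with u hu
  exact (if_pos hu.le).symm

theorem tendsto_F_zero : Tendsto P.F (𝓝[Ioo (0:ℝ) 1] 0) atBot := by
  have h := P.tendsto_D_half_zero
  have h2 : Tendsto (fun t => -P.D 2⁻¹ t) (𝓝[Ioo (0:ℝ) 1] 0) atBot := tendsto_neg_atTop_atBot.comp h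
  apply h2.congr'
  filter_upwards [eventually_nhdsWithin_of_eventually_nhds
    (Filter.Tendsto.eventually_lt_const (by norm_num : (0:ℝ) < 2⁻¹) tendsto_id)] with u hu
  exact (if_neg (not_le.2 hu)).symm

instance : (𝓝[Ioo (0:ℝ) 1] (1:ℝ)).NeBot := by
  apply mem_closure_iff_nhdsWithin_neBot.1
  rw [closure_Ioo (by norm_num : (0:ℝ) ≠ 1)]
  exact ⟨zero_le_one, le_refl 1⟩

instance : (𝓝[Ioo (0:ℝ) 1] (0:ℝ)).NeBot := by
  apply mem_closure_iff_nhdsWithin_neBot.1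
  rw [closure_Ioo (by norm_num : (0:ℝ) ≠ 1)]
  exact ⟨le_refl 0, zero_le_one⟩

theorem F_surj (u : ℝ) : ∃ t ∈ Ioo (0:ℝ) 1, P.F t = u := by
  obtain ⟨t₂, ht₂, hFt₂⟩ := ((P.tendsto_F_one.eventually_gt_atTop u).and self_mem_nhdsWithin).exists
  obtain ⟨t₁, ht₁, hFt₁⟩ := ((P.tendsto_F_zero.eventually_lt_atBot u).and self_mem_nhdsWithin).exists
  have hlt : t₁ < t₂ := by
    by_contra hc
    push_neg at hc
    have := P.strictMonoOn_F.monotoneOn hFt₂ hFt₁ hc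
    linarith
  have hsub : Icc t₁ t₂ ⊆ Ioo (0:ℝ) 1 := fun x hx => ⟨lt_of_lt_of_le hFt₁.1 hx.1, lt_of_le_of_lt hx.2 hFt₂.2⟩
  have := intermediate_value_Ioo hlt.le (P.continuousOn_F.mono hsub)
  obtain ⟨t, htm, hft⟩ := this ⟨ht₁, ht₂⟩
  exact ⟨t, hsub ⟨htm.1.le, htm.2.le⟩, hft⟩

/-- A choice of inverse for `F`. -/
noncomputable def G (u : ℝ) : ℝ := (P.F_surj u).choose

theorem G_mem (u : ℝ) : P.G u ∈ Ioo (0:ℝ) 1 := (P.F_surj u).choose_spec.1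

theorem F_G (u : ℝ) : P.F (P.G u) = u := (P.F_surj u).choose_spec.2

theorem G_F {t : ℝ} (ht : t ∈ Ioo (0:ℝ) 1) : P.G (P.F t) = t :=
  P.strictMonoOn_F.injOn (P.G_mem _) ht (P.F_G _)

theorem G_lt_G {u v : ℝ} (h : u < v) : P.G u < P.G v := by
  rcases lt_trichotomy (P.G u) (P.G v) with hc | hc | hc
  · exact hc
  · exfalso; have := congrArg P.F hc; rw [P.F_G, P.F_G] at this; exact h.ne this
  · exfalso
    have := P.strictMonoOn_F (P.G_mem v) (P.G_mem u) hc
    rw [P.F_G, P.F_G] at this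
    linarith

theorem G_mono : StrictMono P.G := fun _ _ h => P.G_lt_G h

theorem G_cont : Continuous P.G := by
  rw [Metric.continuous_iff]
  intro u ε hε
  set t := P.G u with htdef
  have htm := P.G_mem u
  set t₁ := max (t/2) (t - ε) with ht₁def
  set t₂ := min ((t+1)/2) (t + ε) with ht₂def
  have ht₁m : t₁ ∈ Ioo (0:ℝ) 1 := by
    constructor
    · apply lt_max_of_lt_left; linarith [htm.1]
    · apply max_lt <;> [linarith [htm.2]; linarith [htm.2]]
  have ht₂m : t₂ ∈ Ioo (0:ℝ) 1 := by
    constructor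
    · apply lt_min <;> [linarith [htm.1]; linarith [htm.1]]
    · apply min_lt_of_left_lt; linarith [htm.2]
  have ht₁lt : t₁ < t := by apply max_lt <;> [linarith [htm.1]; linarith]
  have ht₂gt : t < t₂ := by apply lt_min <;> [linarith [htm.2]; linarith]
  have hF₁ : P.F t₁ < u := by
    have := P.strictMonoOn_F ht₁m htm ht₁lt
    rwa [show P.F t = u from by rw [htdef, P.F_G]] at this
  have hF₂ : u < P.F t₂ := by
    have := P.strictMonoOn_F htm ht₂m ht₂gt
    rwa [show P.F t = u from by rw [htdef, P.F_G]] at this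
  refine ⟨min (u - P.F t₁) (P.F t₂ - u), lt_min (by linarith) (by linarith), fun v hv => ?_⟩
  rw [Real.dist_eq] at hv ⊢
  have habs := abs_lt.1 hv
  have hm1 := min_le_left (u - P.F t₁) (P.F t₂ - u)
  have hm2 := min_le_right (u - P.F t₁) (P.F t₂ - u)
  have h1 : P.F t₁ < v := by linarith
  have h2 : v < P.F t₂ := by linarith
  have hg1 : t₁ < P.G v := by
    have := P.G_lt_G h1
    rwa [P.G_F ht₁m] at this
  have hg2 : P.G v < t₂ := by
    have := P.G_lt_G h2
    rwa [P.G_F ht₂m] at this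
  rw [abs_lt]
  constructor
  · have := le_max_right (t/2) (t - ε); linarith
  · have := min_le_right ((t+1)/2) (t + ε); linarith

theorem G_tendsto_atTop : Tendsto P.G atTop (𝓝 1) := by
  rw [tendsto_order]
  constructor
  · intro c hc
    set m := max c 2⁻¹ with hm
    have hm1 : m < 1 := by apply max_lt hc; norm_num
    have hm0 : (0:ℝ) < m := lt_max_of_lt_right (by norm_num)
    have hmm : (m+1)/2 ∈ Ioo (0:ℝ) 1 := ⟨by linarith, by linarith⟩
    filter_upwards [eventually_ge_atTop (P.F ((m+1)/2))] with u hu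
    have : (m+1)/2 ≤ P.G u := by
      rcases eq_or_lt_of_le hu with h | h
      · rw [← h, P.G_F hmm]
      · exact (by rw [← P.G_F hmm]; exact (P.G_lt_G h).le)
    calc c ≤ m := le_max_left _ _
    _ < (m+1)/2 := by linarith
    _ ≤ P.G u := this
  · intro c hc
    filter_upwards with u
    exact lt_of_lt_of_le (P.G_mem u).2 (by linarith)

theorem G_tendsto_atBot : Tendsto P.G atBot (𝓝 0) := by
  rw [tendsto_order]
  constructor
  · intro c hc
    filter_upwards with u
    exact lt_of_le_of_lt (by linarith) (P.G_mem u).1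
  · intro c hc
    set m := min c 2⁻¹ with hm
    have hm1 : m ≤ 2⁻¹ := min_le_right _ _
    have hm0 : (0:ℝ) < m := lt_min hc (by norm_num)
    have hmm : m/2 ∈ Ioo (0:ℝ) 1 := ⟨by linarith, by linarith⟩
    filter_upwards [eventually_le_atBot (P.F (m/2))] with u hu
    have : P.G u ≤ m/2 := by
      rcases eq_or_lt_of_le hu with h | h
      · rw [h, P.G_F hmm]
      · exact (by rw [← P.G_F hmm]; exact (P.G_lt_G h).le)
    calc P.G u ≤ m/2 := this
    _ < m := by linarith
    _ ≤ c := min_le_left _ _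

/-- Parameter of a point. -/
noncomputable def par (x : X) : ℝ := Int.fract (P.surj x).choose

theorem par_mem (x : X) : P.par x ∈ Ico (0:ℝ) 1 :=
  ⟨Int.fract_nonneg _, Int.fract_lt_one _⟩

theorem gamma_par (x : X) : P.γ (P.par x) = x := by
  rw [par, P.gamma_fract]
  exact (P.surj x).choose_spec

theorem par_mem_Ioo {x : X} (hx : x ≠ P.ω) : P.par x ∈ Ioo (0:ℝ) 1 := by
  rcases eq_or_lt_of_le (P.par_mem x).1 with h | h
  · exfalso; apply hx; rw [← P.gamma_par x, ← h]; rfl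
  · exact ⟨h, (P.par_mem x).2⟩

theorem par_gamma {t : ℝ} (ht : t ∈ Ico (0:ℝ) 1) : P.par (P.γ t) = t :=
  P.inj _ _ (P.par_mem _) ht (P.gamma_par _)

/-- Coordinate of a point. -/
noncomputable def g (x : X) : ℝ := P.F (P.par x)

theorem dist_eq_g {x y : X} (hx : x ≠ P.ω) (hy : y ≠ P.ω) :
    dist x y = |P.g y - P.g x| * (dist x P.ω * dist y P.ω) := by
  have := P.dist_eq_F (P.par_mem_Ioo hx) (P.par_mem_Ioo hy)
  rwa [P.gamma_par, P.gamma_par] at this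

theorem g_inj {x y : X} (hx : x ≠ P.ω) (hy : y ≠ P.ω) (h : P.g x = P.g y) : x = y := by
  have := P.strictMonoOn_F.injOn (P.par_mem_Ioo hx) (P.par_mem_Ioo hy) h
  rw [← P.gamma_par x, ← P.gamma_par y, this]

end PtCircle

theorem eq_of_abs_sub_eq {p q s t : ℝ} (hpq : p ≠ q) (h1 : |s - p| = |t - p|)
    (h2 : |s - q| = |t - q|) : s = t := by
  have e1 : (s - p)^2 = (t - p)^2 := by rw [← sq_abs (s-p), h1, sq_abs]
  have e2 : (s - q)^2 = (t - q)^2 := by rw [← sq_abs (s-q), h2, sq_abs]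
  have h3 : 2 * (s - t) * (q - p) = 0 := by linear_combination e1 - e2
  have hqp : q - p ≠ 0 := sub_ne_zero.2 (Ne.symm hpq)
  have h4 : s - t = 0 := by
    rcases mul_eq_zero.1 h3 with h | h
    · rcases mul_eq_zero.1 h with h' | h'
      · norm_num at h'
      · exact h'
    · exact absurd h hqp
  linarith


/-- Given two Ptolemy circles `C` and `C'` (metric spaces homeomorphic to `S¹`,
parameterized with period 1, satisfying the Ptolemy equality on cyclically ordered
quadruples) and triples of distinct points `x₁,x₂,x₃ ∈ C`, `x₁',x₂',x₃' ∈ C'`,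
there is a unique Möbius homeomorphism `φ : C → C'` with `φ(xᵢ) = xᵢ'`. -/
theorem stmt_12 {C C' : Type*} [MetricSpace C] [MetricSpace C']
    (γ : ℝ → C) (hcont : Continuous γ) (hper : ∀ t, γ (t + 1) = γ t)
    (hinj : ∀ s t : ℝ, s ∈ Set.Ico (0:ℝ) 1 → t ∈ Set.Ico (0:ℝ) 1 → γ s = γ t → s = t)
    (hsurj : Function.Surjective γ)
    (hcirc : ∀ t₁ t₂ t₃ t₄ : ℝ, t₁ ≤ t₂ → t₂ ≤ t₃ → t₃ ≤ t₄ → t₄ ≤ t₁ + 1 →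
      dist (γ t₁) (γ t₃) * dist (γ t₂) (γ t₄) =
        dist (γ t₁) (γ t₂) * dist (γ t₃) (γ t₄) + dist (γ t₁) (γ t₄) * dist (γ t₂) (γ t₃))
    (γ' : ℝ → C') (hcont' : Continuous γ') (hper' : ∀ t, γ' (t + 1) = γ' t)
    (hinj' : ∀ s t : ℝ, s ∈ Set.Ico (0:ℝ) 1 → t ∈ Set.Ico (0:ℝ) 1 → γ' s = γ' t → s = t)
    (hsurj' : Function.Surjective γ')
    (hcirc' : ∀ t₁ t₂ t₃ t₄ : ℝ, t₁ ≤ t₂ → t₂ ≤ t₃ → t₃ ≤ t₄ → t₄ ≤ t₁ + 1 →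
      dist (γ' t₁) (γ' t₃) * dist (γ' t₂) (γ' t₄) =
        dist (γ' t₁) (γ' t₂) * dist (γ' t₃) (γ' t₄) + dist (γ' t₁) (γ' t₄) * dist (γ' t₂) (γ' t₃))
    (x₁ x₂ x₃ : C) (x₁' x₂' x₃' : C')
    (h12 : x₁ ≠ x₂) (h13 : x₁ ≠ x₃) (h23 : x₂ ≠ x₃)
    (h12' : x₁' ≠ x₂') (h13' : x₁' ≠ x₃') (h23' : x₂' ≠ x₃') :
    ∃! φ : C → C', (Function.Bijective φ ∧ Continuous φ ∧ IsMoebiusMap φ) ∧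
      φ x₁ = x₁' ∧ φ x₂ = x₂' ∧ φ x₃ = x₃' := by
  classical
  obtain ⟨t₃, ht₃⟩ := hsurj x₃
  obtain ⟨t₃', ht₃'⟩ := hsurj' x₃'
  set P : PtCircle C := (PtCircle.mk γ hcont hper hinj hsurj hcirc).shift t₃ with hP
  set P' : PtCircle C' := (PtCircle.mk γ' hcont' hper' hinj' hsurj' hcirc').shift t₃' with hP'
  have hPω : P.ω = x₃ := by show γ (0 + t₃) = x₃; rw [zero_add, ht₃]
  have hP'ω : P'.ω = x₃' := by show γ' (0 + t₃') = x₃'; rw [zero_add, ht₃']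
  have hx1ω : x₁ ≠ P.ω := by rw [hPω]; exact h13
  have hx2ω : x₂ ≠ P.ω := by rw [hPω]; exact h23
  have hx1'ω : x₁' ≠ P'.ω := by rw [hP'ω]; exact h13'
  have hx2'ω : x₂' ≠ P'.ω := by rw [hP'ω]; exact h23'
  -- coordinates
  have hgne : P.g x₂ - P.g x₁ ≠ 0 :=
    sub_ne_zero.2 fun h => h12 (P.g_inj hx2ω hx1ω h).symm
  have hgne' : P'.g x₂' - P'.g x₁' ≠ 0 :=
    sub_ne_zero.2 fun h => h12' (P'.g_inj hx2'ω hx1'ω h).symm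
  set aa : ℝ := (P'.g x₂' - P'.g x₁') / (P.g x₂ - P.g x₁) with haa
  set bb : ℝ := P'.g x₁' - aa * P.g x₁ with hbb
  have ha : aa ≠ 0 := div_ne_zero hgne' hgne
  have hkey : aa * (P.g x₂ - P.g x₁) = P'.g x₂' - P'.g x₁' := div_mul_cancel₀ _ hgne
  set φ : C → C' := fun x => if x = x₃ then x₃' else P'.γ (P'.G (aa * P.g x + bb)) with hφdef
  -- basic facts about φ
  have hφ3 : φ x₃ = x₃' := by rw [hφdef]; simp
  have hgφ : ∀ x, x ≠ x₃ → P'.g (φ x) = aa * P.g x + bb := by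
    intro x hx
    rw [hφdef]
    simp only [if_neg hx]
    rw [PtCircle.g, P'.par_gamma ⟨(P'.G_mem _).1.le, (P'.G_mem _).2⟩, P'.F_G]
  have hφne : ∀ x, x ≠ x₃ → φ x ≠ x₃' := by
    intro x hx
    rw [hφdef]
    simp only [if_neg hx]
    rw [← hP'ω]
    exact P'.ne_omega (P'.G_mem _)
  have hgval : ∀ y' : C', y' ≠ x₃' → φ (P.γ (P.G ((P'.g y' - bb) / aa))) = y' := by
    intro y' hy'
    have hy'ω : y' ≠ P'.ω := by rw [hP'ω]; exact hy'
    have hne : P.γ (P.G ((P'.g y' - bb) / aa)) ≠ x₃ := by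
      rw [← hPω]; exact P.ne_omega (P.G_mem _)
    rw [hφdef]
    simp only [if_neg hne]
    have hg2 : P.g (P.γ (P.G ((P'.g y' - bb) / aa))) = (P'.g y' - bb) / aa := by
      rw [PtCircle.g, P.par_gamma ⟨(P.G_mem _).1.le, (P.G_mem _).2⟩, P.F_G]
    rw [hg2]
    have h5 : aa * ((P'.g y' - bb) / aa) + bb = P'.g y' := by field_simp; ring
    rw [h5, PtCircle.g, P'.G_F (P'.par_mem_Ioo hy'ω), P'.gamma_par]
  have hrec : ∀ x : C, x ≠ P.ω → P.γ (P.G (P.g x)) = x := by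
    intro x hx
    rw [PtCircle.g, P.G_F (P.par_mem_Ioo hx), P.gamma_par]
  have hφ1 : φ x₁ = x₁' := by
    have h5 : (P'.g x₁' - bb) / aa = P.g x₁ := by rw [hbb]; field_simp; ring
    have h := hgval x₁' h13'
    rwa [h5, hrec x₁ hx1ω] at h
  have hφ2 : φ x₂ = x₂' := by
    have h5 : (P'.g x₂' - bb) / aa = P.g x₂ := by
      rw [hbb, div_eq_iff ha]
      linear_combination -hkey
    have h := hgval x₂' h23'
    rwa [h5, hrec x₂ hx2ω] at h
  -- conformal factor
  set ρ : C → ℝ := fun x => if x = x₃ then |aa|⁻¹ else dist (φ x) x₃' / dist x x₃ with hρdef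
  have hρpos : ∀ x, 0 < ρ x := by
    intro x
    rw [hρdef]
    by_cases hx : x = x₃
    · simp only [if_pos hx]
      exact inv_pos.2 (abs_pos.2 ha)
    · simp only [if_neg hx]
      exact div_pos (dist_pos.2 (hφne x hx)) (dist_pos.2 hx)
  have hρ3 : ρ x₃ = |aa|⁻¹ := by rw [hρdef]; simp
  have hρx : ∀ x, x ≠ x₃ → ρ x = dist (φ x) x₃' / dist x x₃ := by
    intro x hx
    rw [hρdef]
    simp [hx]
  have hmain : ∀ x, x ≠ x₃ → dist (φ x) x₃' = ρ x * dist x x₃ := by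
    intro x hx
    rw [hρx x hx, div_mul_eq_mul_div, mul_div_assoc, div_self (dist_pos.2 hx).ne', mul_one]
  have habsa : |aa| * |aa|⁻¹ = 1 := mul_inv_cancel₀ (abs_pos.2 ha).ne'
  have hstar : ∀ x y, dist (φ x) (φ y) = |aa| * ρ x * ρ y * dist x y := by
    intro x y
    by_cases hx : x = x₃
    · by_cases hy : y = x₃
      · rw [hx, hy, hφ3]; simp
      · rw [hx, hφ3, hρ3, dist_comm x₃' (φ y), hmain y hy, dist_comm x₃ y, habsa, one_mul]
    · by_cases hy : y = x₃
      · rw [hy, hφ3, hρ3, hmain x hx]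
        linear_combination -(ρ x * dist x x₃) * habsa
      · have hxω : x ≠ P.ω := by rw [hPω]; exact hx
        have hyω : y ≠ P.ω := by rw [hPω]; exact hy
        have hφxω : φ x ≠ P'.ω := by rw [hP'ω]; exact hφne x hx
        have hφyω : φ y ≠ P'.ω := by rw [hP'ω]; exact hφne y hy
        have h1 := P'.dist_eq_g hφxω hφyω
        rw [hgφ x hx, hgφ y hy, hP'ω,
          show aa * P.g y + bb - (aa * P.g x + bb) = aa * (P.g y - P.g x) from by ring,
          abs_mul] at h1
        have h2 := P.dist_eq_g hxω hyω
        rw [hPω] at h2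
        rw [h1, h2, hρx x hx, hρx y hy]
        have d1 : dist x x₃ ≠ 0 := (dist_pos.2 hx).ne'
        have d2 : dist y x₃ ≠ 0 := (dist_pos.2 hy).ne'
        field_simp
  have hinjφ : Function.Injective φ := by
    intro x y hxy
    by_contra hne
    have := hstar x y
    rw [hxy, dist_self] at this
    have h0 : 0 < |aa| * ρ x * ρ y * dist x y :=
      mul_pos (mul_pos (mul_pos (abs_pos.2 ha) (hρpos x)) (hρpos y)) (dist_pos.2 hne)
    rw [← this] at h0
    exact lt_irrefl 0 h0
  have hsurjφ : Function.Surjective φ := by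
    intro y'
    by_cases hy' : y' = x₃'
    · exact ⟨x₃, by rw [hφ3, hy']⟩
    · exact ⟨P.γ (P.G ((P'.g y' - bb) / aa)), hgval y' hy'⟩
  have hmoebφ : IsMoebiusMap φ := by
    refine ⟨hinjφ, fun p q r s => ⟨?_, ?_, ?_⟩⟩ <;>
      · simp only [hstar]
        ring
  -- continuity
  have hΦkey : ∀ u ∈ Ioo (0:ℝ) 1, φ (P.γ u) = P'.γ (P'.G (aa * P.F u + bb)) := by
    intro u hu
    have hne : P.γ u ≠ x₃ := by rw [← hPω]; exact P.ne_omega hu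
    rw [hφdef]
    simp only [if_neg hne]
    rw [show P.g (P.γ u) = P.F u from by rw [PtCircle.g, P.par_gamma ⟨hu.1.le, hu.2⟩]]
  have hγ'G : ∀ l : Filter ℝ, Tendsto (fun u : ℝ => aa * P.F u + bb) l atBot ∨
      Tendsto (fun u : ℝ => aa * P.F u + bb) l atTop →
      Tendsto (fun u => P'.γ (P'.G (aa * P.F u + bb))) l (𝓝 x₃') := by
    intro l hl
    rcases hl with h | h
    · have := (P'.cont.tendsto 0).comp (P'.G_tendsto_atBot.comp h)
      rwa [show P'.γ 0 = x₃' from by rw [← hP'ω]; rfl] at this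
    · have := (P'.cont.tendsto 1).comp (P'.G_tendsto_atTop.comp h)
      rwa [show P'.γ 1 = x₃' from by rw [P'.gamma_one, hP'ω]] at this
  have hlin : ∀ l : Filter ℝ, (Tendsto P.F l atBot ∨ Tendsto P.F l atTop) →
      Tendsto (fun u : ℝ => aa * P.F u + bb) l atBot ∨
      Tendsto (fun u : ℝ => aa * P.F u + bb) l atTop := by
    intro l hl
    rcases lt_or_gt_of_ne ha with haneg | hapos
    · rcases hl with h | h
      · exact Or.inr (tendsto_atTop_add_const_right _ bb ((tendsto_const_mul_atTop_of_neg haneg).2 h))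
      · exact Or.inl (tendsto_atBot_add_const_right _ bb ((tendsto_const_mul_atBot_of_neg haneg).2 h))
    · rcases hl with h | h
      · exact Or.inl (tendsto_atBot_add_const_right _ bb ((tendsto_const_mul_atBot_of_pos hapos).2 h))
      · exact Or.inr (tendsto_atTop_add_const_right _ bb ((tendsto_const_mul_atTop_of_pos hapos).2 h))
  have hsplit : Icc (0:ℝ) 1 = Ioo 0 1 ∪ {0, 1} := by
    ext u
    simp only [mem_Icc, mem_Ioo, mem_union, mem_insert_iff, mem_singleton_iff]
    constructor
    · rintro ⟨h1, h2⟩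
      rcases eq_or_lt_of_le h1 with h1' | h1'
      · exact Or.inr (Or.inl h1'.symm)
      · rcases eq_or_lt_of_le h2 with h2' | h2'
        · exact Or.inr (Or.inr h2')
        · exact Or.inl ⟨h1', h2'⟩
    · rintro (⟨h1, h2⟩ | h | h)
      · exact ⟨h1.le, h2.le⟩
      · exact ⟨by rw [h], by rw [h]; norm_num⟩
      · exact ⟨by rw [h]; norm_num, by rw [h]⟩
  have hendval : φ (P.γ 0) = x₃' ∧ φ (P.γ 1) = x₃' := by
    constructor
    · rw [show P.γ 0 = x₃ from hPω ▸ rfl, hφ3]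
    · rw [P.gamma_one, show P.ω = x₃ from hPω, hφ3]
  have hΦcont : ContinuousOn (fun u : ℝ => φ (P.γ u)) (Icc 0 1) := by
    intro u hu
    by_cases huI : u ∈ Ioo (0:ℝ) 1
    · have hc1 : ContinuousOn (fun v : ℝ => aa * P.F v + bb) (Ioo 0 1) :=
        (continuousOn_const.mul P.continuousOn_F).add continuousOn_const
      have hc : ContinuousOn (fun v => P'.γ (P'.G (aa * P.F v + bb))) (Ioo 0 1) :=
        (P'.cont.comp P'.G_cont).comp_continuousOn hc1
      exact ((hc u huI).congr hΦkey (hΦkey u huI)).mono_of_mem_nhdsWithin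
        (mem_nhdsWithin_of_mem_nhds (isOpen_Ioo.mem_nhds huI))
    · have hu01 : u = 0 ∨ u = 1 := by
        rcases hu with ⟨h1, h2⟩
        rcases eq_or_lt_of_le h1 with h | h
        · exact Or.inl h.symm
        · rcases eq_or_lt_of_le h2 with h' | h'
          · exact Or.inr h'
          · exact absurd ⟨h, h'⟩ huI
      have hval : φ (P.γ u) = x₃' := by
        rcases hu01 with h | h
        · rw [h]; exact hendval.1
        · rw [h]; exact hendval.2
      rw [ContinuousWithinAt, hval, hsplit, nhdsWithin_union, tendsto_sup]
      constructor
      · -- on Ioo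
        have hF : Tendsto P.F (𝓝[Ioo (0:ℝ) 1] u) atBot ∨ Tendsto P.F (𝓝[Ioo (0:ℝ) 1] u) atTop := by
          rcases hu01 with h | h
          · rw [h]; exact Or.inl P.tendsto_F_zero
          · rw [h]; exact Or.inr P.tendsto_F_one
        refine (hγ'G _ (hlin _ hF)).congr' ?_
        filter_upwards [self_mem_nhdsWithin] with v hv
        exact (hΦkey v hv).symm
      · -- on {0, 1}
        have hconst : ∀ v ∈ ({0, 1} : Set ℝ), φ (P.γ v) = x₃' := by
          rintro v (rfl | rfl)
          · exact hendval.1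
          · exact hendval.2
        refine Tendsto.congr' ?_ tendsto_const_nhds
        filter_upwards [self_mem_nhdsWithin] with v hv
        exact (hconst v hv).symm
  have hφcont : Continuous φ := by
    have hqc : Continuous (fun t : Icc (0:ℝ) 1 => P.γ t) := P.cont.comp continuous_subtype_val
    have hΦc : Continuous (fun t : Icc (0:ℝ) 1 => φ (P.γ t)) :=
      hΦcont.comp_continuous continuous_subtype_val (fun t => t.2)
    rw [continuous_iff_isClosed]
    intro K hK
    have himg : φ ⁻¹' K = (fun t : Icc (0:ℝ) 1 => P.γ t) '' ((fun t : Icc (0:ℝ) 1 => φ (P.γ t)) ⁻¹' K) := by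
      ext y
      constructor
      · intro hy
        obtain ⟨v, hv⟩ := P.surj y
        have hvI : Int.fract v ∈ Icc (0:ℝ) 1 := ⟨Int.fract_nonneg v, (Int.fract_lt_one v).le⟩
        refine ⟨⟨Int.fract v, hvI⟩, ?_, ?_⟩
        · show φ (P.γ (Int.fract v)) ∈ K
          rw [P.gamma_fract, hv]
          exact hy
        · show P.γ (Int.fract v) = y
          rw [P.gamma_fract, hv]
      · rintro ⟨t, ht, rfl⟩
        exact ht
    rw [himg]
    exact hqc.isClosedMap _ (hK.preimage hΦc)
  -- assemble
  refine ⟨φ, ⟨⟨⟨hinjφ, hsurjφ⟩, hφcont, hmoebφ⟩, hφ1, hφ2, hφ3⟩, ?_⟩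
  rintro ψ ⟨⟨hbijψ, hcψ, hinjMψ, hmψ⟩, hψ1, hψ2, hψ3⟩
  funext x
  by_cases hx3 : x = x₃
  · rw [hx3, hψ3, hφ3]
  by_cases hx1 : x = x₁
  · rw [hx1, hψ1, hφ1]
  by_cases hx2 : x = x₂
  · rw [hx2, hψ2, hφ2]
  -- generic point
  have hxω : x ≠ P.ω := by rw [hPω]; exact hx3
  have hψxne : ψ x ≠ x₃' := fun h => hx3 (hinjMψ (h.trans hψ3.symm))
  have hψxω : ψ x ≠ P'.ω := by rw [hP'ω]; exact hψxne
  have hφxω : φ x ≠ P'.ω := by rw [hP'ω]; exact hφne x hx3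
  obtain ⟨eq1, eq2, _⟩ := hmψ x₁ x₂ x₃ x
  rw [hψ1, hψ2, hψ3] at eq1 eq2
  -- distances in coordinates
  have hd12 : dist x₁ x₂ = |P.g x₂ - P.g x₁| * (dist x₁ x₃ * dist x₂ x₃) := by
    have h := P.dist_eq_g hx1ω hx2ω
    rwa [hPω] at h
  have hd1x : dist x₁ x = |P.g x - P.g x₁| * (dist x₁ x₃ * dist x x₃) := by
    have h := P.dist_eq_g hx1ω hxω
    rwa [hPω] at h
  have hd2x : dist x₂ x = |P.g x - P.g x₂| * (dist x₂ x₃ * dist x x₃) := by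
    have h := P.dist_eq_g hx2ω hxω
    rwa [hPω] at h
  have hd12' : dist x₁' x₂' = |P'.g x₂' - P'.g x₁'| * (dist x₁' x₃' * dist x₂' x₃') := by
    have h := P'.dist_eq_g hx1'ω hx2'ω
    rwa [hP'ω] at h
  have hd1x' : dist x₁' (ψ x) = |P'.g (ψ x) - P'.g x₁'| * (dist x₁' x₃' * dist (ψ x) x₃') := by
    have h := P'.dist_eq_g hx1'ω hψxω
    rwa [hP'ω] at h
  have hd2x' : dist x₂' (ψ x) = |P'.g (ψ x) - P'.g x₂'| * (dist x₂' x₃' * dist (ψ x) x₃') := by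
    have h := P'.dist_eq_g hx2'ω hψxω
    rwa [hP'ω] at h
  have w1 : dist x₁ x₃ ≠ 0 := (dist_pos.2 h13).ne'
  have w2 : dist x₂ x₃ ≠ 0 := (dist_pos.2 h23).ne'
  have wx : dist x x₃ ≠ 0 := (dist_pos.2 hx3).ne'
  have w1' : dist x₁' x₃' ≠ 0 := (dist_pos.2 h13').ne'
  have w2' : dist x₂' x₃' ≠ 0 := (dist_pos.2 h23').ne'
  have wx' : dist (ψ x) x₃' ≠ 0 := (dist_pos.2 hψxne).ne'
  have hdx3 : dist x₃ x = dist x x₃ := dist_comm _ _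
  have hdx3' : dist x₃' (ψ x) = dist (ψ x) x₃' := dist_comm _ _
  have hd13 : dist x₁ x₃ = dist x₁ x₃ := rfl
  -- eq1 : (d x₁ x₂ * d x₃ x) * (d x₁' x₃' * d x₂' ψx) = (d x₁' x₂' * d x₃' ψx) * (d x₁ x₃ * d x₂ x)
  rw [hd12, hdx3, hd2x', hd12', hdx3', hd2x] at eq1
  have E1 : |P.g x₂ - P.g x₁| * |P'.g (ψ x) - P'.g x₂'| =
      |P'.g x₂' - P'.g x₁'| * |P.g x - P.g x₂| := by
    apply mul_right_cancel₀ (show dist x₁ x₃ * dist x₂ x₃ * dist x x₃ *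
      (dist x₁' x₃' * dist x₂' x₃' * dist (ψ x) x₃') ≠ 0 from by positivity)
    linear_combination eq1
  rw [hd13] at eq1
  -- eq2 : (d x₁ x₃ * d x₂ x) * (d x₁' ψx * d x₂' x₃') = (d x₁' x₃' * d x₂' ψx) * (d x₁ x * d x₂ x₃)
  rw [hd2x, hd1x', hd2x', hd1x] at eq2
  have E2 : |P.g x - P.g x₂| * |P'.g (ψ x) - P'.g x₁'| =
      |P'.g (ψ x) - P'.g x₂'| * |P.g x - P.g x₁| := by
    apply mul_right_cancel₀ (show dist x₁ x₃ * dist x₂ x₃ * dist x x₃ *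
      (dist x₁' x₃' * dist x₂' x₃' * dist (ψ x) x₃') ≠ 0 from by positivity)
    linear_combination eq2
  -- coordinates of φ x
  have hgφx : P'.g (φ x) = aa * P.g x + bb := hgφ x hx3
  have hp' : P'.g x₁' = aa * P.g x₁ + bb := by rw [hbb]; ring
  have hq' : P'.g x₂' = aa * P.g x₂ + bb := by rw [hbb]; linear_combination -hkey
  have hF1 : |P'.g (φ x) - P'.g x₁'| = |aa| * |P.g x - P.g x₁| := by
    rw [hgφx, hp', show aa * P.g x + bb - (aa * P.g x₁ + bb) = aa * (P.g x - P.g x₁) from by ring,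
      abs_mul]
  have hF2 : |P'.g (φ x) - P'.g x₂'| = |aa| * |P.g x - P.g x₂| := by
    rw [hgφx, hq', show aa * P.g x + bb - (aa * P.g x₂ + bb) = aa * (P.g x - P.g x₂) from by ring,
      abs_mul]
  -- |aa| in terms of the g's
  have habs2 : |P'.g x₂' - P'.g x₁'| = |aa| * |P.g x₂ - P.g x₁| := by
    rw [← hkey, abs_mul]
  have hg12 : |P.g x₂ - P.g x₁| ≠ 0 := abs_ne_zero.2 hgne
  have hgx2 : |P.g x - P.g x₂| ≠ 0 :=
    abs_ne_zero.2 (sub_ne_zero.2 fun h => hx2 (P.g_inj hxω hx2ω h))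
  have G1 : |P'.g (ψ x) - P'.g x₂'| = |aa| * |P.g x - P.g x₂| := by
    apply mul_left_cancel₀ hg12
    rw [E1, habs2]
    ring
  have G2 : |P'.g (ψ x) - P'.g x₁'| = |aa| * |P.g x - P.g x₁| := by
    apply mul_left_cancel₀ hgx2
    rw [E2, G1]
    ring
  -- conclude
  have hgg : P'.g (ψ x) = P'.g (φ x) := by
    have hpq' : P'.g x₁' ≠ P'.g x₂' := fun h => h12' (P'.g_inj hx1'ω hx2'ω h)
    apply eq_of_abs_sub_eq hpq' (G2.trans hF1.symm) (G1.trans hF2.symm)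
  exact P'.g_inj hψxω hφxω hgg
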